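/- The scheme expRK5s8 satisfies all requirements collected in the construction of Section 5. Concretely, with nodes c₂ = c₃ = c₅ = 1/2, c₄ = 1/4, c₆ = 1/5, c₇ = 2/3, c₈ = 1, weights b₂ = b₃ = b₄ = b₅ = 0, b₆ = (125/14)φ₂ − (625/14)φ₃ + (1125/14)φ₄, b₇ = −(27/14)φ₂ + (162/7)φ₃ − (405/7)φ₄, b₈ = (1/2)φ₂ − (13/2)φ₃ + (45/2)φ₄, and internal coefficients a₃₂(z) = (1/2)φ₂(z/2), a₄₃(z) = (1/8)φ₂(z/4), a₅₃(z) = −(1/2)φ₂(z/2) + 2φ₃(z/2), a₅₄(z) = 2φ₂(z/2) − 4φ₃(z/2), a₆₄(z) = (8/25)φ₂(z/5) − (32/125)φ₃(z/5), a₆₅(z) = (2/25)φ₂(z/5) − (1/2)a₆₄(z), a₇₄(z) = −(125/162)a₆₄(z), a₇₅(z) = (125/1944)a₆₄(z) − (16/27)φ₂(2z/3) + (320/81)φ₃(2z/3), a₇₆(z) = (3125/3888)a₆₄(z) + (100/27)φ₂(2z/3) − (800/81)φ₃(2z/3), a₈₅(z) = (208/3)φ₃(z) − (16/3)φ₂(z)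 − 40Φ(z), a₈₆(z) = −(250/3)φ₃(z) + (250/21)φ₂(z) + (250/7)Φ(z), a₈₇(z) = −27φ₃(z) + (27/14)φ₂(z) + (135/7)Φ(z), where Φ(z) = (5/32)a₆₄(z) − (1/28)φ₂(z/5) + (36/175)φ₂(2z/3) − (48/25)φ₃(2z/3) + (6/175)φ₄(z/5) + (192/35)φ₄(2z/3) + 6φ₄(z), and all other a_{ij} = 0, the following hold for all z ∈ ℂ: (i) ∑_{i=2}^{8} b_i(z)c_i = φ₂(z), ∑_{i=2}^{8} b_i(z)c_i²/2 = φ₃(z), ∑_{i=2}^{8} b_i(z)c_i³/6 = φ₄(z); (ii) ψ_{2,i}(z) = 0 for i = 3, 4, 5, 6, 7, 8 and ψ_{3,i}(z) = 0 for i = 5, 6, 7, 8; (iii) ∑_{i=2}^{8} b_i(0)c_i⁴/4! = 1/120; (iv) b₆(0)ψ_{4,6}(z) + b₇(0)ψ_{4,7}(z) + b₈(0)ψ_{4,8}(z) = 0; and (v) b₆(0)a₆₄(z) + b₇(0)a₇₄(z) + b₈(0)a₈₄(z) = 0. -/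

import Mathlib

/-- For `k ≥ 1`, `φ_k(z) = ∫_0^1 exp((1-θ)z) θ^(k-1)/(k-1)! dθ`; `φ_0(z) = exp z`. -/
noncomputable def phi : ℕ → ℂ → ℂ
  | 0 => fun z => Complex.exp z
  | (k + 1) => fun z =>
      ∫ θ in (0:ℝ)..1, Complex.exp ((1 - (θ : ℂ)) * z) * (θ : ℂ) ^ k / (Nat.factorial k : ℂ)

/-- `ψ_{j,i}(z) = ∑_{k=2}^{i-1} a_{ik}(z) c_k^{j-1}/(j-1)! - c_i^j φ_j(c_i z)`. -/
noncomputable def psi (c : ℕ → ℂ) (a : ℕ → ℕ → ℂ → ℂ) (j i : ℕ) (z : ℂ) : ℂ :=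
  (∑ k ∈ Finset.Icc 2 (i - 1), a i k z * (c k) ^ (j - 1) / (Nat.factorial (j - 1) : ℂ))
    - (c i) ^ j * phi j (c i * z)

lemma phi_succ_zero (k : ℕ) : phi (k+1) 0 = 1 / (Nat.factorial (k+1) : ℂ) := by
  have : phi (k+1) 0 = ∫ θ in (0:ℝ)..1, (((θ:ℝ)^k / (Nat.factorial k : ℝ) : ℝ) : ℂ) := by
    simp [phi]
  rw [this, intervalIntegral.integral_ofReal]
  rw [intervalIntegral.integral_div, integral_pow]
  push_cast [Nat.factorial_succ]
  field_simp
  simp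

lemma phi_two_zero : phi 2 0 = 1/2 := by
  have h := phi_succ_zero 1; norm_num [Nat.factorial] at h; exact h

lemma phi_three_zero : phi 3 0 = 1/6 := by
  have h := phi_succ_zero 2; norm_num [Nat.factorial] at h; exact h

lemma phi_four_zero : phi 4 0 = 1/24 := by
  have h := phi_succ_zero 3; norm_num [Nat.factorial] at h; exact h

theorem stmt_15 (c : ℕ → ℂ) (b : ℕ → ℂ → ℂ) (a : ℕ → ℕ → ℂ → ℂ) (Φ : ℂ → ℂ)
    (hc2 : c 2 = 1 / 2) (hc3 : c 3 = 1 / 2) (hc4 : c 4 = 1 / 4) (hc5 : c 5 = 1 / 2)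
    (hc6 : c 6 = 1 / 5) (hc7 : c 7 = 2 / 3) (hc8 : c 8 = 1)
    (hb2 : b 2 = 0) (hb3 : b 3 = 0) (hb4 : b 4 = 0) (hb5 : b 5 = 0)
    (hb6 : ∀ z : ℂ, b 6 z = (125 / 14) * phi 2 z - (625 / 14) * phi 3 z + (1125 / 14) * phi 4 z)
    (hb7 : ∀ z : ℂ, b 7 z = -(27 / 14) * phi 2 z + (162 / 7) * phi 3 z - (405 / 7) * phi 4 z)
    (hb8 : ∀ z : ℂ, b 8 z = (1 / 2) * phi 2 z - (13 / 2) * phi 3 z + (45 / 2) * phi 4 z)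
    (ha32 : ∀ z : ℂ, a 3 2 z = (1 / 2) * phi 2 (z / 2))
    (ha43 : ∀ z : ℂ, a 4 3 z = (1 / 8) * phi 2 (z / 4))
    (ha53 : ∀ z : ℂ, a 5 3 z = -(1 / 2) * phi 2 (z / 2) + 2 * phi 3 (z / 2))
    (ha54 : ∀ z : ℂ, a 5 4 z = 2 * phi 2 (z / 2) - 4 * phi 3 (z / 2))
    (ha64 : ∀ z : ℂ, a 6 4 z = (8 / 25) * phi 2 (z / 5) - (32 / 125) * phi 3 (z / 5))
    (ha65 : ∀ z : ℂ, a 6 5 z = (2 / 25) * phi 2 (z / 5) - (1 / 2) * a 6 4 z)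
    (ha74 : ∀ z : ℂ, a 7 4 z = -(125 / 162) * a 6 4 z)
    (ha75 : ∀ z : ℂ, a 7 5 z =
      (125 / 1944) * a 6 4 z - (16 / 27) * phi 2 (2 * z / 3) + (320 / 81) * phi 3 (2 * z / 3))
    (ha76 : ∀ z : ℂ, a 7 6 z =
      (3125 / 3888) * a 6 4 z + (100 / 27) * phi 2 (2 * z / 3) - (800 / 81) * phi 3 (2 * z / 3))
    (hΦ : ∀ z : ℂ, Φ z = (5 / 32) * a 6 4 z - (1 / 28) * phi 2 (z / 5)
      + (36 / 175) * phi 2 (2 * z / 3) - (48 / 25) * phi 3 (2 * z / 3)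
      + (6 / 175) * phi 4 (z / 5) + (192 / 35) * phi 4 (2 * z / 3) + 6 * phi 4 z)
    (ha85 : ∀ z : ℂ, a 8 5 z = (208 / 3) * phi 3 z - (16 / 3) * phi 2 z - 40 * Φ z)
    (ha86 : ∀ z : ℂ, a 8 6 z = -(250 / 3) * phi 3 z + (250 / 21) * phi 2 z + (250 / 7) * Φ z)
    (ha87 : ∀ z : ℂ, a 8 7 z = -27 * phi 3 z + (27 / 14) * phi 2 z + (135 / 7) * Φ z)
    (haOther : ∀ i k : ℕ, ((i, k) : ℕ × ℕ) ∉
      ({(3, 2), (4, 3), (5, 3), (5, 4), (6, 4), (6, 5), (7, 4), (7, 5), (7, 6),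
        (8, 5), (8, 6), (8, 7)} : Set (ℕ × ℕ)) → a i k = 0) :
    -- (i) the stiff order conditions 1, 2 and 4 in strong form
    (∀ z : ℂ, ∑ i ∈ Finset.Icc 2 8, b i z * c i = phi 2 z) ∧
    (∀ z : ℂ, ∑ i ∈ Finset.Icc 2 8, b i z * (c i) ^ 2 / 2 = phi 3 z) ∧
    (∀ z : ℂ, ∑ i ∈ Finset.Icc 2 8, b i z * (c i) ^ 3 / 6 = phi 4 z) ∧
    -- (ii) vanishing of the internal ψ-functions
    (∀ z : ℂ, ∀ i ∈ ({3, 4, 5, 6, 7, 8} : Finset ℕ), psi c a 2 i z = 0) ∧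
    (∀ z : ℂ, ∀ i ∈ ({5, 6, 7, 8} : Finset ℕ), psi c a 3 i z = 0) ∧
    -- (iii) the weakened condition 8 at Z = 0
    (∑ i ∈ Finset.Icc 2 8, b i 0 * (c i) ^ 4 / 24 = 1 / 120) ∧
    -- (iv) the weakened condition 9
    (∀ z : ℂ, b 6 0 * psi c a 4 6 z + b 7 0 * psi c a 4 7 z + b 8 0 * psi c a 4 8 z = 0) ∧
    -- (v) the weakened conditions 10/11
    (∀ z : ℂ, b 6 0 * a 6 4 z + b 7 0 * a 7 4 z + b 8 0 * a 8 4 z = 0) := by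
  have h42 : a 4 2 = 0 := haOther 4 2 (by simp only [Set.mem_insert_iff, Set.mem_singleton_iff, Prod.mk.injEq, not_or]; omega)
  have h52 : a 5 2 = 0 := haOther 5 2 (by simp only [Set.mem_insert_iff, Set.mem_singleton_iff, Prod.mk.injEq, not_or]; omega)
  have h62 : a 6 2 = 0 := haOther 6 2 (by simp only [Set.mem_insert_iff, Set.mem_singleton_iff, Prod.mk.injEq, not_or]; omega)
  have h63 : a 6 3 = 0 := haOther 6 3 (by simp only [Set.mem_insert_iff, Set.mem_singleton_iff, Prod.mk.injEq, not_or]; omega)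
  have h72 : a 7 2 = 0 := haOther 7 2 (by simp only [Set.mem_insert_iff, Set.mem_singleton_iff, Prod.mk.injEq, not_or]; omega)
  have h73 : a 7 3 = 0 := haOther 7 3 (by simp only [Set.mem_insert_iff, Set.mem_singleton_iff, Prod.mk.injEq, not_or]; omega)
  have h82 : a 8 2 = 0 := haOther 8 2 (by simp only [Set.mem_insert_iff, Set.mem_singleton_iff, Prod.mk.injEq, not_or]; omega)
  have h83 : a 8 3 = 0 := haOther 8 3 (by simp only [Set.mem_insert_iff, Set.mem_singleton_iff, Prod.mk.injEq, not_or]; omega)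
  have h84 : a 8 4 = 0 := haOther 8 4 (by simp only [Set.mem_insert_iff, Set.mem_singleton_iff, Prod.mk.injEq, not_or]; omega)
  have hb60 : b 6 0 = 125/336 := by
    rw [hb6 0, phi_two_zero, phi_three_zero, phi_four_zero]; norm_num
  have hb70 : b 7 0 = 27/56 := by
    rw [hb7 0, phi_two_zero, phi_three_zero, phi_four_zero]; norm_num
  have hb80 : b 8 0 = 5/48 := by
    rw [hb8 0, phi_two_zero, phi_three_zero, phi_four_zero]; norm_num
  have e2 : ∀ f : ℕ → ℂ, ∑ k ∈ Finset.Icc 2 2, f k = f 2 := fun f => by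
    show ∑ k ∈ ({2} : Finset ℕ), f k = _; simp
  have e3 : ∀ f : ℕ → ℂ, ∑ k ∈ Finset.Icc 2 3, f k = f 2 + f 3 := fun f => by
    show ∑ k ∈ ({2,3} : Finset ℕ), f k = _
    simp [Finset.sum_insert, Finset.mem_insert]
  have e4 : ∀ f : ℕ → ℂ, ∑ k ∈ Finset.Icc 2 4, f k = f 2 + f 3 + f 4 := fun f => by
    show ∑ k ∈ ({2,3,4} : Finset ℕ), f k = _
    simp [Finset.sum_insert, Finset.mem_insert]; ring
  have e5 : ∀ f : ℕ → ℂ, ∑ k ∈ Finset.Icc 2 5, f k = f 2 + f 3 + f 4 + f 5 := fun f => by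
    show ∑ k ∈ ({2,3,4,5} : Finset ℕ), f k = _
    simp [Finset.sum_insert, Finset.mem_insert]; ring
  have e6 : ∀ f : ℕ → ℂ, ∑ k ∈ Finset.Icc 2 6, f k = f 2 + f 3 + f 4 + f 5 + f 6 := fun f => by
    show ∑ k ∈ ({2,3,4,5,6} : Finset ℕ), f k = _
    simp [Finset.sum_insert, Finset.mem_insert]; ring
  have e7 : ∀ f : ℕ → ℂ, ∑ k ∈ Finset.Icc 2 7, f k
      = f 2 + f 3 + f 4 + f 5 + f 6 + f 7 := fun f => by
    show ∑ k ∈ ({2,3,4,5,6,7} : Finset ℕ), f k = _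
    simp [Finset.sum_insert, Finset.mem_insert]; ring
  have e8 : ∀ f : ℕ → ℂ, ∑ i ∈ Finset.Icc 2 8, f i
      = f 2 + f 3 + f 4 + f 5 + f 6 + f 7 + f 8 := fun f => by
    show ∑ i ∈ ({2,3,4,5,6,7,8} : Finset ℕ), f i = _
    simp [Finset.sum_insert, Finset.mem_insert]; ring
  refine ⟨?_, ?_, ?_, ?_, ?_, ?_, ?_, ?_⟩
  · intro z
    rw [e8]
    simp only [hb2, hb3, hb4, hb5, hb6, hb7, hb8, hc2, hc3, hc4, hc5, hc6, hc7, hc8,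
      Pi.zero_apply]
    ring
  · intro z
    rw [e8]
    simp only [hb2, hb3, hb4, hb5, hb6, hb7, hb8, hc2, hc3, hc4, hc5, hc6, hc7, hc8,
      Pi.zero_apply]
    ring
  · intro z
    rw [e8]
    simp only [hb2, hb3, hb4, hb5, hb6, hb7, hb8, hc2, hc3, hc4, hc5, hc6, hc7, hc8,
      Pi.zero_apply]
    ring
  · intro z i hi
    fin_cases hi <;>
    · simp only [psi]
      norm_num [e2, e3, e4, e5, e6, e7, Nat.factorial,
        ha32, ha43, ha53, ha54, ha64, ha65, ha74, ha75, ha76, hΦ, ha85, ha86, ha87,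
        h42, h52, h62, h63, h72, h73, h82, h83, h84,
        hc2, hc3, hc4, hc5, hc6, hc7, hc8, Pi.zero_apply]
      ring_nf
  · intro z i hi
    fin_cases hi <;>
    · simp only [psi]
      norm_num [e2, e3, e4, e5, e6, e7, Nat.factorial,
        ha32, ha43, ha53, ha54, ha64, ha65, ha74, ha75, ha76, hΦ, ha85, ha86, ha87,
        h42, h52, h62, h63, h72, h73, h82, h83, h84,
        hc2, hc3, hc4, hc5, hc6, hc7, hc8, Pi.zero_apply]
      ring_nf
  · rw [e8]
    simp only [hb2, hb3, hb4, hb5, hb60, hb70, hb80, hc2, hc3, hc4, hc5, hc6, hc7, hc8,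
      Pi.zero_apply]
    norm_num
  · intro z
    rw [hb60, hb70, hb80]
    simp only [psi]
    norm_num [e2, e3, e4, e5, e6, e7, Nat.factorial,
      ha32, ha43, ha53, ha54, ha64, ha65, ha74, ha75, ha76, hΦ, ha85, ha86, ha87,
      h42, h52, h62, h63, h72, h73, h82, h83, h84,
      hc2, hc3, hc4, hc5, hc6, hc7, hc8, Pi.zero_apply]
    ring_nf
  · intro z
    rw [hb60, hb70, hb80, ha74 z, h84]
    simp only [Pi.zero_apply]
    ring
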